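/- Let A be a local ring with maximal ideal m_A and residue field F, let G be a group, and let σ : G → GL₄(A) be a representation whose reduction modulo m_A is block upper-triangular with diagonal blocks χ^{k-2}, ρ, χ^{k-1} (of sizes 1, 2, 1) where ρ is absolutely irreducible over F and the three diagonal blocks are pairwise non-isomorphic after semisimplification. Then the reduction σ̄ has scalar centralizer: any matrix C ∈ M₄(F) commuting with σ̄(g) for all g ∈ G is a scalar multiple of the identity. -/

import Mathlib

open Matrix

section Helpers

variable {F : Type*} [Field F] {G : Type*} [Group G]

private lemma vecMul_std' (y : Fin 2 → F) (i j k : Fin 2) :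
    vecMul y (Matrix.single i j (1:F)) k = if k = j then y i else 0 := by
  simp [vecMul, dotProduct, Matrix.single, Fin.sum_univ_two]
  fin_cases i <;> fin_cases j <;> fin_cases k <;> simp

private lemma mulVec_std' (u : Fin 2 → F) (i j k : Fin 2) :
    mulVec (Matrix.single i j (1:F)) u k = if k = i then u j else 0 := by
  simp [mulVec, dotProduct, Matrix.single, Fin.sum_univ_two]
  fin_cases i <;> fin_cases j <;> fin_cases k <;> simp

private lemma vecMul_smul_right' (y : Fin 2 → F) (r : F) (M : Matrix (Fin 2) (Fin 2) F) :
    vecMul y (r • M) = r • vecMul y M := by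
  ext k; simp [vecMul, dotProduct, Fin.sum_univ_two]; ring

private lemma mulVec_smul_left' (u : Fin 2 → F) (r : F) (M : Matrix (Fin 2) (Fin 2) F) :
    mulVec (r • M) u = r • mulVec M u := by
  exact smul_mulVec r M u

private lemma span_prop' (ρ : G →* GL (Fin 2) F)
    (hirr : Submodule.span F (Set.range fun g => (ρ g : Matrix (Fin 2) (Fin 2) F)) = ⊤)
    (P : Matrix (Fin 2) (Fin 2) F → Prop)
    (h0 : P 0) (hadd : ∀ M N, P M → P N → P (M + N))
    (hsmul : ∀ (t : F) M, P M → P (t • M))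
    (hgen : ∀ g, P (ρ g : Matrix (Fin 2) (Fin 2) F)) :
    ∀ M, P M := by
  intro M
  have hM : M ∈ Submodule.span F (Set.range fun g => (ρ g : Matrix (Fin 2) (Fin 2) F)) := by
    rw [hirr]; trivial
  refine Submodule.span_induction ?_ h0 (fun x y _ _ hx hy => hadd x y hx hy)
    (fun t x _ hx => hsmul t x hx) hM
  rintro x ⟨g, rfl⟩; exact hgen g

private lemma burnside_vecMul' (ρ : G →* GL (Fin 2) F)
    (hirr : Submodule.span F (Set.range fun g => (ρ g : Matrix (Fin 2) (Fin 2) F)) = ⊤)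
    (y : Fin 2 → F) (t : G → F) (h : ∀ g, vecMul y (ρ g : Matrix (Fin 2) (Fin 2) F) = t g • y) :
    y = 0 := by
  have key : ∀ M : Matrix (Fin 2) (Fin 2) F, ∃ s : F, vecMul y M = s • y := by
    refine span_prop' ρ hirr _ ⟨0, by simp⟩ ?_ ?_ (fun g => ⟨t g, h g⟩)
    · rintro M N ⟨s, hs⟩ ⟨s', hs'⟩
      exact ⟨s + s', by rw [vecMul_add, hs, hs', add_smul]⟩
    · rintro r M ⟨s, hs⟩
      exact ⟨r * s, by rw [vecMul_smul_right', hs, smul_smul]⟩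
  by_contra hy
  obtain ⟨i, hi⟩ : ∃ i, y i ≠ 0 := by
    by_contra h'; push_neg at h'; exact hy (funext fun i => h' i)
  obtain ⟨s0, hs0⟩ := key (Matrix.single i 0 1)
  obtain ⟨s1, hs1⟩ := key (Matrix.single i 1 1)
  have e00 := congrFun hs0 0
  have e01 := congrFun hs0 1
  have e11 := congrFun hs1 1
  rw [vecMul_std'] at e00 e01 e11
  simp only [Pi.smul_apply, smul_eq_mul] at e00 e01 e11
  simp at e00 e01 e11
  rcases e01 with h1 | h1
  · exact hi (by rw [e00, h1, zero_mul])
  · exact hi (by rw [e11, h1, mul_zero])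

private lemma burnside_mulVec' (ρ : G →* GL (Fin 2) F)
    (hirr : Submodule.span F (Set.range fun g => (ρ g : Matrix (Fin 2) (Fin 2) F)) = ⊤)
    (u : Fin 2 → F) (t : G → F) (h : ∀ g, mulVec (ρ g : Matrix (Fin 2) (Fin 2) F) u = t g • u) :
    u = 0 := by
  have key : ∀ M : Matrix (Fin 2) (Fin 2) F, ∃ s : F, mulVec M u = s • u := by
    refine span_prop' ρ hirr _ ⟨0, by simp⟩ ?_ ?_ (fun g => ⟨t g, h g⟩)
    · rintro M N ⟨s, hs⟩ ⟨s', hs'⟩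
      exact ⟨s + s', by rw [add_mulVec, hs, hs', add_smul]⟩
    · rintro r M ⟨s, hs⟩
      exact ⟨r * s, by rw [mulVec_smul_left', hs, smul_smul]⟩
  by_contra hu
  obtain ⟨j, hj⟩ : ∃ j, u j ≠ 0 := by
    by_contra h'; push_neg at h'; exact hu (funext fun j => h' j)
  obtain ⟨s0, hs0⟩ := key (Matrix.single 0 j 1)
  obtain ⟨s1, hs1⟩ := key (Matrix.single 1 j 1)
  have e00 := congrFun hs0 0
  have e01 := congrFun hs0 1
  have e11 := congrFun hs1 1
  rw [mulVec_std'] at e00 e01 e11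
  simp only [Pi.smul_apply, smul_eq_mul] at e00 e01 e11
  simp at e00 e01 e11
  rcases e01 with h1 | h1
  · exact hj (by rw [e00, h1, zero_mul])
  · exact hj (by rw [e11, h1, mul_zero])

private lemma burnside_commute' (ρ : G →* GL (Fin 2) F)
    (hirr : Submodule.span F (Set.range fun g => (ρ g : Matrix (Fin 2) (Fin 2) F)) = ⊤)
    (X : Matrix (Fin 2) (Fin 2) F)
    (h : ∀ g, X * (ρ g : Matrix (Fin 2) (Fin 2) F) = (ρ g : Matrix (Fin 2) (Fin 2) F) * X) :
    ∃ s : F, X = s • 1 := by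
  have key : ∀ M : Matrix (Fin 2) (Fin 2) F, X * M = M * X := by
    refine span_prop' ρ hirr _ (by simp) ?_ ?_ h
    · intro M N hM hN; rw [mul_add, add_mul, hM, hN]
    · intro t M hM; rw [mul_smul_comm, smul_mul_assoc, hM]
  obtain ⟨s, hs⟩ := mem_range_scalar_of_commute_single
    (M := X) (fun i j _ => (key (Matrix.single i j 1)).symm)
  refine ⟨s, ?_⟩
  rw [← hs]
  ext i j
  simp [Matrix.scalar_apply, Matrix.one_apply, Matrix.diagonal_apply]

end Helpers

/-- Let `σ : G → GL₄(A)` over a local ring `A` reduce modulo the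
maximal ideal to `σ̄ = [[χ^(k-2), a, b],[0, ρ, c],[0, 0, χ^(k-1)]]` over the residue
field `F`, where `ρ` is absolutely irreducible (Burnside: the matrices `ρ(g)` span
`M₂(F)`), `a` and `c` are nonsplit extension classes, and the diagonal blocks are
pairwise non-isomorphic (here `χ^(k-2) ≠ χ^(k-1)`).  Then `σ̄` has scalar centralizer. -/
theorem residual_rep_scalar_centralizer
    {A : Type*} [CommRing A] [IsLocalRing A]
    {F : Type*} [Field F] (π : A →+* F)
    (hπsurj : Function.Surjective π)
    (hπker : ∀ x : A, π x = 0 ↔ x ∈ IsLocalRing.maximalIdeal A)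
    {G : Type*} [Group G]
    (k : ℕ) (χ : G →* Fˣ) (ρ : G →* GL (Fin 2) F)
    (σ : G →* Matrix (Fin 4) (Fin 4) A)
    (σbar : G →* Matrix (Fin 4) (Fin 4) F)
    (hred : ∀ g, (σ g).map π = σbar g)
    (a : G → Fin 2 → F) (b : G → F) (c : G → Fin 2 → F)
    (hform : ∀ g, σbar g =
      !![(χ g : F) ^ (k - 2), a g 0, a g 1, b g;
         0, (ρ g : Matrix (Fin 2) (Fin 2) F) 0 0, (ρ g : Matrix (Fin 2) (Fin 2) F) 0 1, c g 0;
         0, (ρ g : Matrix (Fin 2) (Fin 2) F) 1 0, (ρ g : Matrix (Fin 2) (Fin 2) F) 1 1, c g 1;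
         0, 0, 0, (χ g : F) ^ (k - 1)])
    -- `ρ` is absolutely irreducible (Burnside criterion):
    (hirr : Submodule.span F
      (Set.range fun g => (ρ g : Matrix (Fin 2) (Fin 2) F)) = ⊤)
    -- the class `a` is a nonsplit extension of `ρ` by `χ^(k-2)`:
    (hans : ¬ ∃ f : Fin 2 → F, ∀ g, a g =
      (χ g : F) ^ (k - 2) • f - Matrix.vecMul f (ρ g : Matrix (Fin 2) (Fin 2) F))
    -- the class `c` is a nonsplit extension of `χ^(k-1)` by `ρ`:
    (hcns : ¬ ∃ f : Fin 2 → F, ∀ g, c g =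
      Matrix.mulVec (ρ g : Matrix (Fin 2) (Fin 2) F) f - (χ g : F) ^ (k - 1) • f)
    -- the two characters on the diagonal are distinct:
    (hχ : ∃ g, (χ g : F) ^ (k - 2) ≠ (χ g : F) ^ (k - 1)) :
    ∀ C : Matrix (Fin 4) (Fin 4) F,
      (∀ g, C * σbar g = σbar g * C) → ∃ s : F, C = s • (1 : Matrix (Fin 4) (Fin 4) F) := by
  intro C hcom
  obtain ⟨g₀, hg₀⟩ := hχ
  have E : ∀ g (i j : Fin 4), (C * σbar g) i j = (σbar g * C) i j :=
    fun g i j => congrFun (congrFun (hcom g) i) j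
  -- Step 1: C 3 0 = 0
  have hC30 : C 3 0 = 0 := by
    have e := E g₀ 3 0
    rw [hform g₀] at e
    simp [Matrix.mul_apply, Fin.sum_univ_four, Matrix.vecHead, Matrix.vecTail] at e
    have h' : ((χ g₀ : F) ^ (k - 2) - (χ g₀ : F) ^ (k - 1)) * C 3 0 = 0 := by
      linear_combination e
    rcases mul_eq_zero.1 h' with h | h
    · exact absurd (sub_eq_zero.1 h) hg₀
    · exact h
  -- Step 2: bottom row elements C 3 1, C 3 2 vanish
  have hrow : ![C 3 1, C 3 2] = 0 := by
    refine burnside_vecMul' ρ hirr _ (fun g => (χ g : F) ^ (k - 1)) (fun g => ?_)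
    have e1 := E g 3 1
    have e2 := E g 3 2
    rw [hform g] at e1 e2
    simp [Matrix.mul_apply, Fin.sum_univ_four, Matrix.vecHead, Matrix.vecTail] at e1 e2
    funext j
    fin_cases j <;>
      simp [Matrix.vecMul, dotProduct, Fin.sum_univ_two]
    · linear_combination e1 - a g 0 * hC30
    · linear_combination e2 - a g 1 * hC30
  have hC31 : C 3 1 = 0 := by simpa using congrFun hrow 0
  have hC32 : C 3 2 = 0 := by simpa using congrFun hrow 1
  -- Step 3: first column elements C 1 0, C 2 0 vanish
  have hcol : ![C 1 0, C 2 0] = 0 := by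
    refine burnside_mulVec' ρ hirr _ (fun g => (χ g : F) ^ (k - 2)) (fun g => ?_)
    have e1 := E g 1 0
    have e2 := E g 2 0
    rw [hform g] at e1 e2
    simp [Matrix.mul_apply, Fin.sum_univ_four, Matrix.vecHead, Matrix.vecTail] at e1 e2
    funext j
    fin_cases j <;>
      simp [Matrix.mulVec, dotProduct, Fin.sum_univ_two]
    · linear_combination -e1 - c g 0 * hC30
    · linear_combination -e2 - c g 1 * hC30
  have hC10 : C 1 0 = 0 := by simpa using congrFun hcol 0
  have hC20 : C 2 0 = 0 := by simpa using congrFun hcol 1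
  -- Step 4: middle block is scalar
  obtain ⟨s, hXs⟩ := burnside_commute' ρ hirr !![C 1 1, C 1 2; C 2 1, C 2 2] (by
    intro g
    have e11 := E g 1 1
    have e12 := E g 1 2
    have e21 := E g 2 1
    have e22 := E g 2 2
    rw [hform g] at e11 e12 e21 e22
    simp [Matrix.mul_apply, Fin.sum_univ_four, Matrix.vecHead, Matrix.vecTail]
      at e11 e12 e21 e22
    ext i j
    fin_cases i <;> fin_cases j <;>
      simp [Matrix.mul_apply, Fin.sum_univ_two]
    · linear_combination e11 - a g 0 * hC10 + c g 0 * hC31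
    · linear_combination e12 - a g 1 * hC10 + c g 0 * hC32
    · linear_combination e21 - a g 0 * hC20 + c g 1 * hC31
    · linear_combination e22 - a g 1 * hC20 + c g 1 * hC32)
  have hC11 : C 1 1 = s := by
    have := congrFun (congrFun hXs 0) 0; simpa [Matrix.one_apply] using this
  have hC12 : C 1 2 = 0 := by
    have := congrFun (congrFun hXs 0) 1; simpa [Matrix.one_apply] using this
  have hC21 : C 2 1 = 0 := by
    have := congrFun (congrFun hXs 1) 0; simpa [Matrix.one_apply] using this
  have hC22 : C 2 2 = s := by
    have := congrFun (congrFun hXs 1) 1; simpa [Matrix.one_apply] using this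
  -- Step 5: C 0 0 = s
  have hC00 : C 0 0 = s := by
    by_contra hne
    apply hans
    refine ⟨(C 0 0 - s)⁻¹ • ![C 0 1, C 0 2], fun g => ?_⟩
    have e1 := E g 0 1
    have e2 := E g 0 2
    rw [hform g] at e1 e2
    simp [Matrix.mul_apply, Fin.sum_univ_four, Matrix.vecHead, Matrix.vecTail] at e1 e2
    have hd : C 0 0 - s ≠ 0 := sub_ne_zero.2 hne
    funext j
    fin_cases j <;>
      simp [Matrix.vecMul, dotProduct, Fin.sum_univ_two] <;>
      field_simp
    · linear_combination e1 + a g 0 * hC11 + a g 1 * hC21 + b g * hC31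
    · linear_combination e2 + a g 0 * hC12 + a g 1 * hC22 + b g * hC32
  -- now C 0 1 = C 0 2 = 0
  have hq : ![C 0 1, C 0 2] = 0 := by
    refine burnside_vecMul' ρ hirr _ (fun g => (χ g : F) ^ (k - 2)) (fun g => ?_)
    have e1 := E g 0 1
    have e2 := E g 0 2
    rw [hform g] at e1 e2
    simp [Matrix.mul_apply, Fin.sum_univ_four, Matrix.vecHead, Matrix.vecTail] at e1 e2
    funext j
    fin_cases j <;>
      simp [Matrix.vecMul, dotProduct, Fin.sum_univ_two]
    · linear_combination e1 - a g 0 * hC00 + a g 0 * hC11 + a g 1 * hC21 + b g * hC31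
    · linear_combination e2 - a g 1 * hC00 + a g 0 * hC12 + a g 1 * hC22 + b g * hC32
  have hC01 : C 0 1 = 0 := by simpa using congrFun hq 0
  have hC02 : C 0 2 = 0 := by simpa using congrFun hq 1
  -- Step 6: C 3 3 = s
  have hC33 : C 3 3 = s := by
    by_contra hne
    apply hcns
    refine ⟨(s - C 3 3)⁻¹ • ![C 1 3, C 2 3], fun g => ?_⟩
    have e1 := E g 1 3
    have e2 := E g 2 3
    rw [hform g] at e1 e2
    simp [Matrix.mul_apply, Fin.sum_univ_four, Matrix.vecHead, Matrix.vecTail] at e1 e2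
    have hd : s - C 3 3 ≠ 0 := sub_ne_zero.2 (Ne.symm hne)
    funext j
    fin_cases j <;>
      simp [Matrix.mulVec, dotProduct, Fin.sum_univ_two] <;>
      field_simp
    · linear_combination e1 - b g * hC10 - c g 0 * hC11 - c g 1 * hC12
    · linear_combination e2 - b g * hC20 - c g 0 * hC21 - c g 1 * hC22
  -- now C 1 3 = C 2 3 = 0
  have hv : ![C 1 3, C 2 3] = 0 := by
    refine burnside_mulVec' ρ hirr _ (fun g => (χ g : F) ^ (k - 1)) (fun g => ?_)
    have e1 := E g 1 3
    have e2 := E g 2 3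
    rw [hform g] at e1 e2
    simp [Matrix.mul_apply, Fin.sum_univ_four, Matrix.vecHead, Matrix.vecTail] at e1 e2
    funext j
    fin_cases j <;>
      simp [Matrix.mulVec, dotProduct, Fin.sum_univ_two]
    · linear_combination -e1 + b g * hC10 + c g 0 * hC11 + c g 1 * hC12 - c g 0 * hC33
    · linear_combination -e2 + b g * hC20 + c g 0 * hC21 + c g 1 * hC22 - c g 1 * hC33
  have hC13 : C 1 3 = 0 := by simpa using congrFun hv 0
  have hC23 : C 2 3 = 0 := by simpa using congrFun hv 1
  -- Step 7: C 0 3 = 0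
  have hC03 : C 0 3 = 0 := by
    have e := E g₀ 0 3
    rw [hform g₀] at e
    simp [Matrix.mul_apply, Fin.sum_univ_four, Matrix.vecHead, Matrix.vecTail] at e
    rw [hC00, hC01, hC02, hC13, hC23, hC33] at e
    have h' : ((χ g₀ : F) ^ (k - 1) - (χ g₀ : F) ^ (k - 2)) * C 0 3 = 0 := by
      linear_combination e
    rcases mul_eq_zero.1 h' with h | h
    · exact absurd (sub_eq_zero.1 h).symm hg₀
    · exact h
  refine ⟨s, ?_⟩
  ext i j
  fin_cases i <;> fin_cases j <;>
    simp [Matrix.one_apply, hC00, hC01, hC02, hC03, hC10, hC11, hC12, hC13,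
      hC20, hC21, hC22, hC23, hC30, hC31, hC32, hC33]
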